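/- Assume Hypothesis (HA). If β ∈ ℝ and f ∈ L^∞(M,μ;ℂ) satisfies P f = λ e^{iβ} f, then the pointwise modulus |f| is, as an element of L^∞(M,μ), a nonnegative scalar multiple of g. -/

import Mathlib

open MeasureTheory ProbabilityTheory Filter Topology

namespace QEM

noncomputable section

variable {M : Type*} [MetricSpace M] [CompactSpace M] [MeasurableSpace M] [BorelSpace M]

/-- The weighted Koopman operator on real-valued functions:
`P f (x) = e^{φ(x)} ∫ f(y) κ(x,dy)`. -/
def PR (φ : M → ℝ) (κ : Kernel M M) (f : M → ℝ) : M → ℝ :=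
  fun x => Real.exp (φ x) * ∫ y, f y ∂(κ x)

/-- The weighted Koopman operator on complex-valued functions
(`P f := P(Re f) + i P(Im f)`, equivalently with the complex Bochner integral). -/
def PC (φ : M → ℝ) (κ : Kernel M M) (f : M → ℂ) : M → ℂ :=
  fun x => (Real.exp (φ x) : ℂ) * ∫ y, f y ∂(κ x)

/-- Bounded measurable real-valued functions. -/
def BddMeas (f : M → ℝ) : Prop := Measurable f ∧ ∃ C : ℝ, ∀ x, |f x| ≤ C

/-- Bounded measurable complex-valued functions. -/
def BddMeasC (f : M → ℂ) : Prop := Measurable f ∧ ∃ C : ℝ, ∀ x, ‖f x‖ ≤ C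

/-- The operator `P_g f := P (1_{g>0} · f)`. -/
def Pg (φ : M → ℝ) (κ : Kernel M M) (g : M → ℝ) : (M → ℝ) → (M → ℝ) :=
  fun f => PR φ κ (Set.indicator {x | 0 < g x} f)

/-- Complex version of `P_g`. -/
def PgC (φ : M → ℝ) (κ : Kernel M M) (g : M → ℝ) : (M → ℂ) → (M → ℂ) :=
  fun f => PC φ κ (Set.indicator {x | 0 < g x} f)

/-- The indicator function of `{g > 0}`. -/
def oneG (g : M → ℝ) : M → ℝ := Set.indicator {x | 0 < g x} (fun _ => (1 : ℝ))

/-- The normalized restriction `μ̃` of `μ` to `{g > 0}`, i.e.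
`μ̃(A) = μ(A ∩ {g>0}) / μ({g>0})`. -/
def mtilde (μ : Measure M) (g : M → ℝ) : Measure M :=
  (μ {x | 0 < g x})⁻¹ • μ.restrict {x | 0 < g x}

/-- The root-of-unity phase `e^{2πi j/k}`. -/
def rootU (k j : ℕ) : ℂ := Complex.exp (2 * (Real.pi : ℂ) * Complex.I * (j : ℂ) / (k : ℂ))

/-- Basic standing setup: `μ` is a fully supported Borel probability measure, `κ` a
sub-Markov kernel with `κ(x,·) ≪ μ` for all `x`, and `φ` a (bounded) continuous function. -/
structure Setup (μ : Measure M) (κ : Kernel M M) (φ : M → ℝ) : Prop where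
  prob : IsProbabilityMeasure μ
  fullSupp : ∀ U : Set M, IsOpen U → U.Nonempty → 0 < μ U
  subMarkov : ∀ x, κ x Set.univ ≤ 1
  ac : ∀ x, κ x ≪ μ
  contφ : Continuous φ

/-- Hypothesis (HA): (i) `P` is strong Feller; (ii) `lam > 0` equals the spectral radius of the
induced operator `T` on `L^∞(M,μ;ℂ)` (where `T` agrees a.e. with the pointwise operator `P` on
bounded measurable representatives); (iii) the eigenspace of `P` at `lam` in `L^∞(M,μ)` is
one-dimensional, spanned by a continuous nonnegative `g ≢ 0` with `P g = lam·g` and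
`∫ g dμ = μ {g>0}`; (iv) `P^*μ = lam·μ`. -/
structure HypHA (μ : Measure M) (κ : Kernel M M) (φ : M → ℝ)
    (T : Lp ℂ ⊤ μ →L[ℂ] Lp ℂ ⊤ μ) (lam : ℝ) (g : M → ℝ) : Prop where
  setup : Setup μ κ φ
  strongFeller : ∀ f : M → ℝ, BddMeas f → Continuous (PR φ κ f)
  lam_pos : 0 < lam
  Tcompat : ∀ f : M → ℂ, BddMeasC f → ∀ F : Lp ℂ ⊤ μ, ⇑F =ᵐ[μ] f →
      ⇑(T F) =ᵐ[μ] PC φ κ f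
  specRad : spectralRadius ℂ T = ENNReal.ofReal lam
  g_cont : Continuous g
  g_nonneg : ∀ x, 0 ≤ g x
  g_ne : g ≠ 0
  g_eigen : PR φ κ g = fun x => lam * g x
  g_int : ∫ x, g x ∂μ = (μ {x | 0 < g x}).toReal
  eigen_dim : ∀ f : M → ℝ, BddMeas f → PR φ κ f =ᵐ[μ] (fun x => lam * f x) →
      ∃ c : ℝ, f =ᵐ[μ] fun x => c * g x
  Pstar : ∀ f : M → ℝ, BddMeas f → ∫ x, PR φ κ f x ∂μ = lam * ∫ x, f x ∂μ

/-- Membership in the point peripheral spectrum `σ_per(P)`: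
`|α| = lam` and `P f = α f` for some nonzero `f ∈ L^∞(M,μ;ℂ)`. -/
def PerSpec (μ : Measure M) (κ : Kernel M M) (φ : M → ℝ) (lam : ℝ) (α : ℂ) : Prop :=
  ‖α‖ = lam ∧ ∃ f : M → ℂ, BddMeasC f ∧ ¬ (f =ᵐ[μ] 0) ∧ PC φ κ f =ᵐ[μ] fun x => α * f x

/-- `σ_per(P) = {lam·e^{2πi j/k} : j = 0, …, k-1}`. -/
def PerSpecEq (μ : Measure M) (κ : Kernel M M) (φ : M → ℝ) (lam : ℝ) (k : ℕ) : Prop :=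
  ∀ α : ℂ, PerSpec μ κ φ lam α ↔ ∃ j : ℕ, j < k ∧ α = (lam : ℂ) * rootU k j

/-- A family of `k` linearly independent, nonnegative, continuous functions with pairwise
disjoint supports, spanning `ker(P^k - lam^k)` in `L^∞(M,μ;ℂ)`, each of integral `μ {g>0}`. -/
structure PreFamily (μ : Measure M) (κ : Kernel M M) (φ : M → ℝ) (lam : ℝ) (g : M → ℝ)
    (k : ℕ) (gi : Fin k → M → ℝ) : Prop where
  cont : ∀ i, Continuous (gi i)
  nonneg : ∀ i x, 0 ≤ gi i x
  indep : LinearIndependent ℝ gi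
  span_ker : ∀ f : M → ℂ, BddMeasC f →
      (((PC φ κ)^[k] f) =ᵐ[μ] fun x => (lam : ℂ) ^ k * f x) ↔
        ∃ c : Fin k → ℂ, f =ᵐ[μ] fun x => ∑ i, c i * (gi i x : ℂ)
  integral : ∀ i, ∫ x, gi i x ∂μ = (μ {x | 0 < g x}).toReal
  disj : ∀ i j, i ≠ j → ∀ x, ¬ (0 < gi i x ∧ 0 < gi j x)

/-- The cyclic family hypothesis: nonnegative continuous `g_0, …, g_{k-1}` supported in `{g>0}`
with pairwise disjoint supports, spanning `ker(P^k - lam^k)` in `L^∞(M,μ;ℂ)`, with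
`∫ g_i dμ = μ {g>0}`, `P g_i = lam·g_{i-1 (mod k)}` and `g = (1/k) ∑ g_i`. -/
structure CyclicFamily (μ : Measure M) (κ : Kernel M M) (φ : M → ℝ) (lam : ℝ) (g : M → ℝ)
    (k : ℕ) [NeZero k] (gi : Fin k → M → ℝ) : Prop where
  cont : ∀ i, Continuous (gi i)
  nonneg : ∀ i x, 0 ≤ gi i x
  supported : ∀ i x, 0 < gi i x → 0 < g x
  disj : ∀ i j, i ≠ j → ∀ x, ¬ (0 < gi i x ∧ 0 < gi j x)
  span_ker : ∀ f : M → ℂ, BddMeasC f →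
      (((PC φ κ)^[k] f) =ᵐ[μ] fun x => (lam : ℂ) ^ k * f x) ↔
        ∃ c : Fin k → ℂ, f =ᵐ[μ] fun x => ∑ i, c i * (gi i x : ℂ)
  integral : ∀ i, ∫ x, gi i x ∂μ = (μ {x | 0 < g x}).toReal
  cycle : ∀ i : Fin k, PR φ κ (gi i) = fun x => lam * gi (i - 1) x
  avg : g = fun x => (1 / (k : ℝ)) * ∑ i, gi i x

/-- The spectral decomposition hypothesis: a closed `P_g`-invariant subspace `V` of
`L^∞({g>0},μ;ℂ)` with `L^∞({g>0},μ;ℂ) = span{g_0,…,g_{k-1}} ⊕ V` and such that the spectral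
radius of `P_g` restricted to `V` is `< lam` (expressed through a geometric bound on the
iterates, via Gelfand's formula). -/
structure SpecDecomp (μ : Measure M) (κ : Kernel M M) (φ : M → ℝ) (lam : ℝ) (g : M → ℝ)
    (k : ℕ) (gi : Fin k → M → ℝ) (V : Submodule ℂ (M → ℂ)) : Prop where
  meas : ∀ v ∈ V, Measurable v
  bdd : ∀ v ∈ V, ∃ C : ℝ, ∀ x, ‖v x‖ ≤ C
  supp : ∀ v ∈ V, ∀ x, ¬ 0 < g x → v x = 0
  invariant : ∀ v ∈ V, PgC φ κ g v ∈ V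
  closed : ∀ (u : ℕ → M → ℂ) (f : M → ℂ), (∀ n, u n ∈ V) → Measurable f →
      (∃ C : ℝ, ∀ x, ‖f x‖ ≤ C) → (∀ x, ¬ 0 < g x → f x = 0) →
      Tendsto (fun n => eLpNorm (u n - f) ⊤ μ) atTop (nhds 0) → f ∈ V
  decomp : ∀ f : M → ℂ, BddMeasC f → (∀ x, ¬ 0 < g x → f x = 0) →
      ∃ c : Fin k → ℂ, ∃ v ∈ V, f = fun x => (∑ i, c i * (gi i x : ℂ)) + v x
  unique : ∀ c : Fin k → ℂ, (fun x => ∑ i, c i * (gi i x : ℂ)) ∈ V → c = 0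
  gap : ∃ r : ℝ, 0 ≤ r ∧ r < lam ∧ ∃ C : ℝ, ∀ n : ℕ, ∀ v ∈ V,
      eLpNorm ((PgC φ κ g)^[n] v) ⊤ μ ≤ ENNReal.ofReal (C * r ^ n) * eLpNorm v ⊤ μ

/-- The operator `P^{k+1} - lam^{k+1}` on complex-valued functions. -/
def Qop (φ : M → ℝ) (κ : Kernel M M) (lam : ℝ) (k : ℕ) : (M → ℂ) → (M → ℂ) :=
  fun h x => (PC φ κ)^[k + 1] h x - (lam : ℂ) ^ (k + 1) * h x

/-- **Step 1 of Lemma A.2.** Under Hypothesis (HA), if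
`P f = lam e^{iβ} f` in `L^∞(M,μ;ℂ)`, then `|f|` is (a.e.) a nonnegative multiple of `g`. -/
theorem statement12 (μ : Measure M) (κ : Kernel M M) (φ : M → ℝ)
    (T : Lp ℂ ⊤ μ →L[ℂ] Lp ℂ ⊤ μ) (lam : ℝ) (g : M → ℝ)
    (hHA : HypHA μ κ φ T lam g)
    (β : ℝ) (f : M → ℂ) (hf : BddMeasC f)
    (heig : PC φ κ f =ᵐ[μ] fun x => (lam : ℂ) * Complex.exp (Complex.I * β) * f x) :
    ∃ c : ℝ, 0 ≤ c ∧ (fun x => ‖f x‖) =ᵐ[μ] fun x => c * g x := by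
  obtain ⟨hfm, C, hfC⟩ := hf
  have hprob : IsProbabilityMeasure μ := hHA.setup.prob
  -- the modulus function is bounded measurable
  have hmod : BddMeas (fun x => ‖f x‖) := ⟨hfm.norm, C, fun x => by
    simpa using hfC x⟩
  -- pointwise inequality ‖PC f x‖ ≤ PR ‖f‖ x
  have hpt : ∀ x, ‖PC φ κ f x‖ ≤ PR φ κ (fun y => ‖f y‖) x := by
    intro x
    have h1 : ‖∫ y, f y ∂(κ x)‖ ≤ ∫ y, ‖f y‖ ∂(κ x) := norm_integral_le_integral_norm _
    have : ‖PC φ κ f x‖ = Real.exp (φ x) * ‖∫ y, f y ∂(κ x)‖ := by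
      simp [PC, norm_mul, Complex.norm_real, abs_of_pos (Real.exp_pos (φ x))]
    rw [this]
    exact mul_le_mul_of_nonneg_left h1 (Real.exp_pos _).le
  -- a.e., lam * ‖f x‖ ≤ PR ‖f‖ x
  have hae : ∀ᵐ x ∂μ, lam * ‖f x‖ ≤ PR φ κ (fun y => ‖f y‖) x := by
    filter_upwards [heig] with x hx
    have h2 : ‖PC φ κ f x‖ = lam * ‖f x‖ := by
      rw [hx]
      have : ‖Complex.exp (Complex.I * β)‖ = 1 := by
        rw [Complex.norm_exp]
        simp
      rw [norm_mul, norm_mul, this]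
      simp [abs_of_pos hHA.lam_pos]
    rw [← h2]; exact hpt x
  -- PR ‖f‖ is continuous (strong Feller), hence integrable
  have hcont : Continuous (PR φ κ (fun y => ‖f y‖)) := hHA.strongFeller _ hmod
  have hint1 : Integrable (PR φ κ (fun y => ‖f y‖)) μ := by
    obtain ⟨B, hB⟩ := IsCompact.exists_bound_of_continuousOn isCompact_univ hcont.continuousOn
    refine Integrable.mono' (integrable_const B) hcont.aestronglyMeasurable ?_
    filter_upwards with x
    exact hB x (Set.mem_univ x)
  have hint2 : Integrable (fun x => ‖f x‖) μ := by
    refine Integrable.mono' (integrable_const C) hfm.norm.aestronglyMeasurable ?_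
    filter_upwards with x
    simpa using hfC x
  -- the difference h has integral zero
  set h : M → ℝ := fun x => PR φ κ (fun y => ‖f y‖) x - lam * ‖f x‖ with hh
  have hinth : Integrable h μ := hint1.sub (hint2.const_mul lam)
  have hint0 : ∫ x, h x ∂μ = 0 := by
    rw [integral_sub hint1 (hint2.const_mul lam), integral_const_mul,
      hHA.Pstar _ hmod, sub_self]
  have hzero : h =ᵐ[μ] 0 := by
    rw [← integral_eq_zero_iff_of_nonneg_ae ?_ hinth]
    · exact hint0
    · filter_upwards [hae] with x hx
      simpa [hh] using sub_nonneg.mpr hx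
  -- hence PR ‖f‖ = lam ‖f‖ a.e., so eigen_dim applies
  have heq : PR φ κ (fun y => ‖f y‖) =ᵐ[μ] fun x => lam * ‖f x‖ := by
    filter_upwards [hzero] with x hx
    have : PR φ κ (fun y => ‖f y‖) x - lam * ‖f x‖ = 0 := hx
    linarith
  obtain ⟨c, hc⟩ := hHA.eigen_dim _ hmod heq
  refine ⟨c, ?_, hc⟩
  -- c is nonnegative: find a point with g x > 0 where the a.e. equality holds
  set S : Set M := {x | 0 < g x} with hS
  have hSopen : IsOpen S := isOpen_lt continuous_const hHA.g_cont
  have hSne : S.Nonempty := by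
    by_contra hcon
    apply hHA.g_ne
    funext x
    have hx : ¬ 0 < g x := fun hgt => hcon ⟨x, hgt⟩
    have := hHA.g_nonneg x
    simp only [Pi.zero_apply]
    linarith [lt_or_eq_of_le this]
    
  have hSpos : 0 < μ S := hHA.setup.fullSupp S hSopen hSne
  have hres : ∀ᵐ x ∂(μ.restrict S), ‖f x‖ = c * g x := ae_restrict_of_ae hc
  have hmem : ∀ᵐ x ∂(μ.restrict S), x ∈ S := ae_restrict_mem hSopen.measurableSet
  have hne : (μ.restrict S) ≠ 0 := by
    intro h0
    have := Measure.restrict_apply_self μ S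
    rw [h0] at this
    simp at this
    exact absurd this (ne_of_gt hSpos).symm
  have : ∃ x, ‖f x‖ = c * g x ∧ x ∈ S := by
    have hb : (ae (μ.restrict S)).NeBot := ae_neBot.mpr hne
    exact (hres.and hmem).exists
  obtain ⟨x, hx1, hx2⟩ := this
  by_contra hcneg
  push_neg at hcneg
  have : c * g x < 0 := mul_neg_of_neg_of_pos hcneg hx2
  linarith [norm_nonneg (f x), hx1 ▸ this]


end

end QEM
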